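/- arXiv:1512.03711 — 2 statements merged into one kernel-verified Lean document; each statement's English description precedes it below -/
import Mathlib

section
/- Let L > 0 and let c : [0, L] → ℝ be twice continuously differentiable. Let D : [0, L] → ℝ be continuously differentiable with D(x) > 0 for all x, let v : [0, L] → ℝ be continuously differentiable, and let σ, f : [0, L] → ℝ be continuous with f(x) ≥ 0 and σ(x) + v'(x) > 0 for all x ∈ [0, L]. Suppose c satisfies the stationary advection–diffusion–reaction equation σ(x)·c(x) − (D·c')'(x) + (v·c)'(x) = f(x) for all x ∈ [0, L], together with the boundary conditions c'(0) = 0 and c(L) ≥ 0. Then c(x) ≥ 0 for all x ∈ [0, L]. -/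
/-- maximum principle (nonnegativity) for the stationary
advection–diffusion–reaction problem `σ c − (D c')' + (v c)' = f` on `[0, L]`
with `c'(0) = 0` and `c(L) ≥ 0`. -/
theorem adr_nonneg_dirichlet (L : ℝ) (hL : 0 < L)
    (c D v σ f : ℝ → ℝ)
    (hc : ContDiffOn ℝ 2 c (Set.Icc 0 L))
    (hD : ContDiffOn ℝ 1 D (Set.Icc 0 L))
    (hDpos : ∀ x ∈ Set.Icc (0 : ℝ) L, 0 < D x)
    (hv : ContDiffOn ℝ 1 v (Set.Icc 0 L))
    (hσ : ContinuousOn σ (Set.Icc 0 L))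
    (hf : ContinuousOn f (Set.Icc 0 L))
    (hfpos : ∀ x ∈ Set.Icc (0 : ℝ) L, 0 ≤ f x)
    (hcoef : ∀ x ∈ Set.Icc (0 : ℝ) L,
      0 < σ x + derivWithin v (Set.Icc 0 L) x)
    (heq : ∀ x ∈ Set.Icc (0 : ℝ) L,
      σ x * c x
        - derivWithin (fun y => D y * derivWithin c (Set.Icc 0 L) y)
            (Set.Icc 0 L) x
        + derivWithin (fun y => v y * c y) (Set.Icc 0 L) x = f x)
    (hbc0 : derivWithin c (Set.Icc 0 L) 0 = 0)
    (hbcL : 0 ≤ c L) :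
    ∀ x ∈ Set.Icc (0 : ℝ) L, 0 ≤ c x := by
  set S := Set.Icc (0:ℝ) L with hSdef
  have hUD : UniqueDiffOn ℝ S := uniqueDiffOn_Icc hL
  have hcont : ContinuousOn c S := hc.continuousOn
  obtain ⟨x₀, hx₀S, hmin⟩ := isCompact_Icc.exists_isMinOn
    ⟨0, Set.left_mem_Icc.2 hL.le⟩ hcont
  intro x hx
  by_contra hneg
  push_neg at hneg
  have hcx₀ : c x₀ < 0 := lt_of_le_of_lt (hmin hx) hneg
  have hx₀L : x₀ < L := by
    rcases lt_or_eq_of_le hx₀S.2 with h | h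
    · exact h
    · exfalso; rw [h] at hcx₀; linarith
  set g := derivWithin c S with hgdef
  have hcdiff : DifferentiableOn ℝ c S := hc.differentiableOn (by norm_num)
  have hgC1 : ContDiffOn ℝ 1 g S := hc.derivWithin hUD (by norm_num)
  have hgdiff : DifferentiableOn ℝ g S := hgC1.differentiableOn (by norm_num)
  -- First derivative vanishes at the minimum point
  have hgx₀ : g x₀ = 0 := by
    rcases eq_or_lt_of_le hx₀S.1 with h | h
    · rw [hgdef, ← h]; exact hbc0
    · have hmem : S ∈ nhds x₀ := Icc_mem_nhds h hx₀L
      have hd : deriv c x₀ = 0 := (hmin.isLocalMin hmem).deriv_eq_zero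
      rw [hgdef, derivWithin_of_mem_nhds hmem, hd]
  -- Compute the two derivatives appearing in the equation at x₀
  have hDc' : derivWithin (fun y => D y * g y) S x₀
      = D x₀ * derivWithin g S x₀ := by
    rw [derivWithin_fun_mul
      (hD.differentiableOn (by norm_num) x₀ hx₀S) (hgdiff x₀ hx₀S), hgx₀]
    ring
  have hvc' : derivWithin (fun y => v y * c y) S x₀
      = derivWithin v S x₀ * c x₀ := by
    rw [derivWithin_fun_mul
      (hv.differentiableOn (by norm_num) x₀ hx₀S) (hcdiff x₀ hx₀S), ← hgdef, hgx₀]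
    ring
  have heq0 := heq x₀ hx₀S
  rw [hDc', hvc'] at heq0
  -- Second derivative at x₀ is negative
  have hg'neg : derivWithin g S x₀ < 0 := by
    have hcoef0 := hcoef x₀ hx₀S
    have hf0 := hfpos x₀ hx₀S
    have hD0 := hDpos x₀ hx₀S
    nlinarith [mul_pos hcoef0 (neg_pos.2 hcx₀)]
  -- g is negative just to the right of x₀
  have hslope : Filter.Tendsto (slope g x₀) (nhdsWithin x₀ (Set.Ioi x₀))
      (nhds (derivWithin g S x₀)) := by
    have h1 : HasDerivWithinAt g (derivWithin g S x₀) S x₀ :=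
      (hgdiff x₀ hx₀S).hasDerivWithinAt
    have h2 := hasDerivWithinAt_iff_tendsto_slope.mp h1
    have hsub : Set.Ioc x₀ L ⊆ S \ {x₀} := by
      intro y hy
      refine ⟨⟨le_trans hx₀S.1 hy.1.le, hy.2⟩, ?_⟩
      simp only [Set.mem_singleton_iff]
      exact ne_of_gt hy.1
    have := h2.mono_left (nhdsWithin_mono x₀ hsub)
    rwa [nhdsWithin_Ioc_eq_nhdsGT hx₀L] at this
  have hev : ∀ᶠ y in nhdsWithin x₀ (Set.Ioi x₀), g y < 0 := by
    filter_upwards [hslope.eventually_lt_const hg'neg, self_mem_nhdsWithin]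
      with y hy hy'
    rw [slope_def_field, hgx₀, sub_zero] at hy
    have hxy : 0 < y - x₀ := sub_pos.2 hy'
    have := (div_neg_iff).mp hy
    rcases this with ⟨h1, h2⟩ | ⟨h1, h2⟩
    · linarith
    · exact h1
  obtain ⟨u, hu, hIoo⟩ := mem_nhdsGT_iff_exists_Ioo_subset.mp hev
  -- Pick x₁ with x₀ < x₁ < L and g < 0 on (x₀, x₁)
  set x₁ := min u ((x₀ + L) / 2) with hx₁def
  have hx₀x₁ : x₀ < x₁ := lt_min hu (by linarith)
  have hx₁L : x₁ < L := lt_of_le_of_lt (min_le_right _ _) (by linarith)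
  have hx₁S : x₁ ∈ S := ⟨le_trans hx₀S.1 hx₀x₁.le, hx₁L.le⟩
  have hgneg : ∀ y ∈ Set.Ioo x₀ x₁, g y < 0 := fun y hy =>
    hIoo ⟨hy.1, lt_of_lt_of_le hy.2 (min_le_left _ _)⟩
  -- MVT on [x₀, x₁]
  obtain ⟨ξ, hξ, hξeq⟩ := exists_hasDerivAt_eq_slope c g hx₀x₁
    (hcont.mono (Set.Icc_subset_Icc hx₀S.1 hx₁L.le))
    (by
      intro y hy
      have hyS : S ∈ nhds y :=
        Icc_mem_nhds (lt_of_le_of_lt hx₀S.1 hy.1) (lt_trans hy.2 hx₁L)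
      exact ((hcdiff y ⟨(le_of_lt (lt_of_le_of_lt hx₀S.1 hy.1)),
        (lt_trans hy.2 hx₁L).le⟩).hasDerivWithinAt).hasDerivAt hyS)
  have hgξ : g ξ < 0 := hgneg ξ hξ
  have hcx₁ : c x₁ < c x₀ := by
    have hd : 0 < x₁ - x₀ := sub_pos.2 hx₀x₁
    have hs : (c x₁ - c x₀) / (x₁ - x₀) < 0 := hξeq ▸ hgξ
    rcases div_neg_iff.mp hs with ⟨h1, h2⟩ | ⟨h1, h2⟩
    · linarith
    · linarith
  exact absurd (hmin hx₁S) (not_le.2 hcx₁)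
end

section
/- Let L > 0 and let φ : [0, L] → ℝ be twice continuously differentiable. Let D : [0, L] → ℝ be continuously differentiable with D(x) > 0 for all x, let v : [0, L] → ℝ be continuously differentiable, and let κ, f : [0, L] → ℝ be continuous with f(x) ≥ 0 and κ(x) + v'(x) > 0 for all x ∈ [0, L]. Suppose φ satisfies the stationary advection–diffusion–reaction equation κ(x)·φ(x) − (D·φ')'(x) + (v·φ)'(x) = f(x) for all x ∈ [0, L], together with the homogeneous Neumann boundary conditions φ'(0) = 0 and φ'(L) = 0. Then φ(x) ≥ 0 for all x ∈ [0, L]. -/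
open Set

lemma adr_aux_second_deriv_nonneg (L : ℝ) (hL : 0 < L) (φ : ℝ → ℝ)
    (hφ : ContDiffOn ℝ 2 φ (Set.Icc 0 L))
    (x₀ : ℝ) (hx₀ : x₀ ∈ Set.Icc (0 : ℝ) L)
    (hmin : ∀ x ∈ Set.Icc (0:ℝ) L, φ x₀ ≤ φ x)
    (hd : derivWithin φ (Set.Icc 0 L) x₀ = 0) :
    0 ≤ derivWithin (derivWithin φ (Set.Icc 0 L)) (Set.Icc 0 L) x₀ := by
  set s : Set ℝ := Set.Icc (0:ℝ) L with hs
  have hud : UniqueDiffOn ℝ s := uniqueDiffOn_Icc hL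
  set φ' := derivWithin φ s with hφ'def
  set φ'' := derivWithin φ' s with hφ''def
  have hφ'C1 : ContDiffOn ℝ 1 φ' s := hφ.derivWithin hud (by norm_num)
  have hφ'diff : DifferentiableOn ℝ φ' s := hφ'C1.differentiableOn (by norm_num)
  have hφdiff : DifferentiableOn ℝ φ s := hφ.differentiableOn (by norm_num)
  have hφ'cont : ContinuousOn φ' s := hφ'diff.continuousOn
  have hφcont : ContinuousOn φ s := hφdiff.continuousOn
  have hφ''cont : ContinuousOn φ'' s :=
    (hφ'C1.derivWithin hud (m := 0) (by norm_num)).continuousOn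
  by_contra hcon
  push_neg at hcon
  -- find δ > 0 such that φ'' < 0 on s ∩ ball x₀ δ
  have hev : φ'' ⁻¹' Set.Iio 0 ∈ nhdsWithin x₀ s :=
    (hφ''cont x₀ hx₀) (Iio_mem_nhds hcon)
  obtain ⟨t, ht, hxt, hts⟩ := mem_nhdsWithin.mp hev
  obtain ⟨δ, hδ, hball⟩ := Metric.isOpen_iff.mp ht x₀ hxt
  have hsub : ∀ x ∈ s, |x - x₀| < δ → φ'' x < 0 := by
    intro x hxL hxd
    exact hts ⟨hball (by simpa [Real.dist_eq] using hxd), hxL⟩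
  -- key fact: at interior points of s, deriv equals derivWithin
  have hkey : ∀ x, 0 < x → x < L → deriv φ' x = φ'' x ∧ deriv φ x = φ' x := by
    intro x h0 h1
    have hns : s ∈ nhds x := Icc_mem_nhds h0 h1
    constructor
    · exact (derivWithin_of_mem_nhds hns).symm
    · exact (derivWithin_of_mem_nhds hns).symm
  rcases lt_or_eq_of_le hx₀.2 with hlt | heqL
  · -- case x₀ < L : work on [x₀, b]
    set b := min L (x₀ + δ / 2) with hb
    have hx₀b : x₀ < b := lt_min hlt (by linarith)
    have hbL : b ≤ L := min_le_left _ _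
    have hIsub : Set.Icc x₀ b ⊆ s := fun x hx => ⟨le_trans hx₀.1 hx.1, le_trans hx.2 hbL⟩
    have hIball : ∀ x ∈ Set.Icc x₀ b, |x - x₀| < δ := by
      intro x hx
      have : x ≤ x₀ + δ / 2 := le_trans hx.2 (min_le_right _ _)
      rw [abs_sub_lt_iff]; constructor <;> [linarith [hx.1]; linarith [hx.1]]
    have hintsub : ∀ x ∈ Set.Ioo x₀ b, 0 < x ∧ x < L := by
      intro x hx
      exact ⟨lt_of_le_of_lt hx₀.1 hx.1, lt_of_lt_of_le hx.2 hbL⟩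
    -- φ' strictly decreasing on [x₀, b]
    have hanti : StrictAntiOn φ' (Set.Icc x₀ b) := by
      apply strictAntiOn_of_deriv_neg (convex_Icc _ _) (hφ'cont.mono hIsub)
      intro x hx
      rw [interior_Icc] at hx
      obtain ⟨h0, h1⟩ := hintsub x hx
      rw [(hkey x h0 h1).1]
      exact hsub x ⟨le_of_lt h0, le_of_lt h1⟩ (hIball x ⟨le_of_lt hx.1, le_of_lt hx.2⟩)
    have hφ'neg : ∀ x ∈ Set.Ioc x₀ b, φ' x < 0 := by
      intro x hx
      have := hanti (Set.left_mem_Icc.mpr (le_of_lt hx₀b)) ⟨le_of_lt hx.1, hx.2⟩ hx.1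
      rwa [hd] at this
    -- hence φ strictly decreasing on [x₀, b]
    have hφanti : StrictAntiOn φ (Set.Icc x₀ b) := by
      apply strictAntiOn_of_deriv_neg (convex_Icc _ _) (hφcont.mono hIsub)
      intro x hx
      rw [interior_Icc] at hx
      obtain ⟨h0, h1⟩ := hintsub x hx
      rw [(hkey x h0 h1).2]
      exact hφ'neg x ⟨hx.1, le_of_lt hx.2⟩
    have : φ b < φ x₀ :=
      hφanti (Set.left_mem_Icc.mpr (le_of_lt hx₀b)) (Set.right_mem_Icc.mpr (le_of_lt hx₀b)) hx₀b
    exact absurd (hmin b (hIsub (Set.right_mem_Icc.mpr (le_of_lt hx₀b)))) (not_le.mpr this)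
  · -- case x₀ = L : work on [a, x₀]
    set a := max 0 (x₀ - δ / 2) with ha
    have h0x₀ : (0:ℝ) < x₀ := heqL ▸ hL
    have hax₀ : a < x₀ := max_lt h0x₀ (by linarith)
    have ha0 : 0 ≤ a := le_max_left _ _
    have hIsub : Set.Icc a x₀ ⊆ s := fun x hx => ⟨le_trans ha0 hx.1, le_trans hx.2 hx₀.2⟩
    have hIball : ∀ x ∈ Set.Icc a x₀, |x - x₀| < δ := by
      intro x hx
      have : x₀ - δ / 2 ≤ x := le_trans (le_max_right _ _) hx.1
      rw [abs_sub_lt_iff]; constructor <;> [linarith [hx.2]; linarith [hx.2]]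
    have hintsub : ∀ x ∈ Set.Ioo a x₀, 0 < x ∧ x < L := by
      intro x hx
      exact ⟨lt_of_le_of_lt ha0 hx.1, heqL ▸ hx.2⟩
    have hanti : StrictAntiOn φ' (Set.Icc a x₀) := by
      apply strictAntiOn_of_deriv_neg (convex_Icc _ _) (hφ'cont.mono hIsub)
      intro x hx
      rw [interior_Icc] at hx
      obtain ⟨h0, h1⟩ := hintsub x hx
      rw [(hkey x h0 h1).1]
      exact hsub x ⟨le_of_lt h0, le_of_lt h1⟩ (hIball x ⟨le_of_lt hx.1, le_of_lt hx.2⟩)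
    have hφ'pos : ∀ x ∈ Set.Ico a x₀, 0 < φ' x := by
      intro x hx
      have := hanti ⟨hx.1, le_of_lt hx.2⟩ (Set.right_mem_Icc.mpr (le_of_lt hax₀)) hx.2
      rwa [hd] at this
    have hφmono : StrictMonoOn φ (Set.Icc a x₀) := by
      apply strictMonoOn_of_deriv_pos (convex_Icc _ _) (hφcont.mono hIsub)
      intro x hx
      rw [interior_Icc] at hx
      obtain ⟨h0, h1⟩ := hintsub x hx
      rw [(hkey x h0 h1).2]
      exact hφ'pos x ⟨le_of_lt hx.1, hx.2⟩
    have : φ a < φ x₀ :=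
      hφmono (Set.left_mem_Icc.mpr (le_of_lt hax₀)) (Set.right_mem_Icc.mpr (le_of_lt hax₀)) hax₀
    exact absurd (hmin a (hIsub (Set.left_mem_Icc.mpr (le_of_lt hax₀)))) (not_le.mpr this)

/-- maximum principle (nonnegativity) for the stationary
advection–diffusion–reaction problem `κ φ − (D φ')' + (v φ)' = f` on `[0, L]`
with homogeneous Neumann boundary conditions `φ'(0) = φ'(L) = 0`. -/
theorem adr_nonneg_neumann (L : ℝ) (hL : 0 < L)
    (φ D v κ f : ℝ → ℝ)
    (hφ : ContDiffOn ℝ 2 φ (Set.Icc 0 L))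
    (hD : ContDiffOn ℝ 1 D (Set.Icc 0 L))
    (hDpos : ∀ x ∈ Set.Icc (0 : ℝ) L, 0 < D x)
    (hv : ContDiffOn ℝ 1 v (Set.Icc 0 L))
    (hκ : ContinuousOn κ (Set.Icc 0 L))
    (hf : ContinuousOn f (Set.Icc 0 L))
    (hfpos : ∀ x ∈ Set.Icc (0 : ℝ) L, 0 ≤ f x)
    (hcoef : ∀ x ∈ Set.Icc (0 : ℝ) L,
      0 < κ x + derivWithin v (Set.Icc 0 L) x)
    (heq : ∀ x ∈ Set.Icc (0 : ℝ) L,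
      κ x * φ x
        - derivWithin (fun y => D y * derivWithin φ (Set.Icc 0 L) y)
            (Set.Icc 0 L) x
        + derivWithin (fun y => v y * φ y) (Set.Icc 0 L) x = f x)
    (hbc0 : derivWithin φ (Set.Icc 0 L) 0 = 0)
    (hbcL : derivWithin φ (Set.Icc 0 L) L = 0) :
    ∀ x ∈ Set.Icc (0 : ℝ) L, 0 ≤ φ x := by
  set s : Set ℝ := Set.Icc (0:ℝ) L with hs
  have hud : UniqueDiffOn ℝ s := uniqueDiffOn_Icc hL
  have hφdiff : DifferentiableOn ℝ φ s := hφ.differentiableOn (by norm_num)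
  have hφ'diff : DifferentiableOn ℝ (derivWithin φ s) s :=
    (hφ.derivWithin hud (by norm_num : (1:WithTop ℕ∞) + 1 ≤ 2)).differentiableOn (by norm_num)
  have hDdiff : DifferentiableOn ℝ D s := hD.differentiableOn (by norm_num)
  have hvdiff : DifferentiableOn ℝ v s := hv.differentiableOn (by norm_num)
  -- minimum point
  obtain ⟨x₀, hx₀, hminOn⟩ :=
    (isCompact_Icc).exists_isMinOn (Set.nonempty_Icc.mpr (le_of_lt hL))
      hφdiff.continuousOn
  have hmin : ∀ x ∈ s, φ x₀ ≤ φ x := fun x hx => hminOn hx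
  suffices h : 0 ≤ φ x₀ by
    intro x hx; exact le_trans h (hmin x hx)
  by_contra hneg
  push_neg at hneg
  -- the within-derivative of φ vanishes at x₀
  have hd : derivWithin φ s x₀ = 0 := by
    rcases eq_or_lt_of_le hx₀.1 with h0 | h0
    · rw [← h0]; exact hbc0
    rcases eq_or_lt_of_le hx₀.2 with hLe | hLe
    · rw [hLe]; exact hbcL
    · have hns : s ∈ nhds x₀ := Icc_mem_nhds h0 hLe
      have hloc : IsLocalMin φ x₀ := hminOn.isLocalMin hns
      rw [derivWithin_of_mem_nhds hns]
      exact hloc.deriv_eq_zero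
  -- second derivative nonneg
  have h2 : 0 ≤ derivWithin (derivWithin φ s) s x₀ :=
    adr_aux_second_deriv_nonneg L hL φ hφ x₀ hx₀ hmin hd
  -- expand the equation at x₀ via product rules
  have hDφ' : derivWithin (fun y => D y * derivWithin φ s y) s x₀
      = derivWithin D s x₀ * derivWithin φ s x₀
        + D x₀ * derivWithin (derivWithin φ s) s x₀ :=
    derivWithin_mul (hDdiff x₀ hx₀) (hφ'diff x₀ hx₀)
  have hvφ : derivWithin (fun y => v y * φ y) s x₀
      = derivWithin v s x₀ * φ x₀ + v x₀ * derivWithin φ s x₀ :=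
    derivWithin_mul (hvdiff x₀ hx₀) (hφdiff x₀ hx₀)
  have he := heq x₀ hx₀
  rw [hDφ', hvφ, hd] at he
  have hfx := hfpos x₀ hx₀
  have hcx := hcoef x₀ hx₀
  have hDx := hDpos x₀ hx₀
  nlinarith [mul_nonneg (le_of_lt hDx) h2]
end
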